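/- Let Q be a finitely supported probability distribution on ℝ^N, let R be a finite nonempty subset of ℝ^N, and let D be a natural number. Let F be the set of polynomials f : ℝ^N → ℝ of degree at most D with E_Q[f] = 0 and E_Q[f²] ≤ 1, and let 𝒫 be the set of probability distributions on ℝ^N supported on R. Then, as an identity in [0, +∞]: inf_{P ∈ 𝒫} sup_{f ∈ F} E_P[f] = sup_{f ∈ F} min_{X ∈ R} f(X). -/

import Mathlib

open Finset

/-- A finitely supported probability distribution on `ℝ^N`, encoded as a finitely
supported weight function: nonnegative weights summing to `1`. -/
def IsDist {N : ℕ} (P : (Fin N → ℝ) →₀ ℝ) : Prop :=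
  (∀ x, 0 ≤ P x) ∧ ∑ x ∈ P.support, P x = 1

/-- Expectation of `f` under a finitely supported distribution `P`. -/
noncomputable def fexp {N : ℕ} (P : (Fin N → ℝ) →₀ ℝ) (f : (Fin N → ℝ) → ℝ) : ℝ :=
  ∑ x ∈ P.support, P x * f x

open scoped ENNReal

lemma fexp_comb {N : ℕ} (P : (Fin N → ℝ) →₀ ℝ) (a b : ℝ) (u w : (Fin N → ℝ) → ℝ) :
    fexp P (fun x => a * u x + b * w x) = a * fexp P u + b * fexp P w := by
  unfold fexp
  rw [Finset.mul_sum, Finset.mul_sum, ← Finset.sum_add_distrib]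
  exact Finset.sum_congr rfl fun x _ => by ring

/-- Let `Q` be a finitely supported distribution on `ℝ^N`, `R` a
finite nonempty subset of `ℝ^N`, and `D ∈ ℕ`. Let `F` be the set of polynomials of
degree at most `D` with `E_Q[f] = 0` and `E_Q[f²] ≤ 1`, and `𝒫` the set of
distributions supported on `R`. Then, in `[0,∞]`:
`inf_{P ∈ 𝒫} sup_{f ∈ F} E_P[f] = sup_{f ∈ F} min_{X ∈ R} f(X)`. -/
theorem stmt18 (N D : ℕ) (Q : (Fin N → ℝ) →₀ ℝ) (hQ : IsDist Q)
    (R : Finset (Fin N → ℝ)) (hR : R.Nonempty) :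
    (⨅ (P : (Fin N → ℝ) →₀ ℝ) (_ : IsDist P ∧ P.support ⊆ R),
      ⨆ (f : MvPolynomial (Fin N) ℝ) (_ : f.totalDegree ≤ D ∧
          fexp Q (fun x => MvPolynomial.eval x f) = 0 ∧
          fexp Q (fun x => (MvPolynomial.eval x f) ^ 2) ≤ 1),
        ENNReal.ofReal (fexp P (fun x => MvPolynomial.eval x f))) =
    ⨆ (f : MvPolynomial (Fin N) ℝ) (_ : f.totalDegree ≤ D ∧
        fexp Q (fun x => MvPolynomial.eval x f) = 0 ∧
        fexp Q (fun x => (MvPolynomial.eval x f) ^ 2) ≤ 1),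
      ENNReal.ofReal (R.inf' hR (fun X => MvPolynomial.eval X f)) := by
  classical
  set Fprop : MvPolynomial (Fin N) ℝ → Prop := fun f => f.totalDegree ≤ D ∧
      fexp Q (fun x => MvPolynomial.eval x f) = 0 ∧
      fexp Q (fun x => (MvPolynomial.eval x f) ^ 2) ≤ 1 with hFprop
  set vE : ENNReal := ⨆ (f : MvPolynomial (Fin N) ℝ) (_ : f.totalDegree ≤ D ∧
        fexp Q (fun x => MvPolynomial.eval x f) = 0 ∧
        fexp Q (fun x => (MvPolynomial.eval x f) ^ 2) ≤ 1),
      ENNReal.ofReal (R.inf' hR (fun X => MvPolynomial.eval X f)) with hvE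
  apply le_antisymm
  · -- hard direction
    by_cases htop : vE = ⊤
    · rw [htop]; exact le_top
    set v : ℝ := vE.toReal with hv
    have h0F : Fprop 0 := by
      refine ⟨by simp, ?_, ?_⟩ <;> simp [fexp]
    have hv0 : 0 ≤ v := ENNReal.toReal_nonneg
    -- Step A: every f in F has min value ≤ v
    have hminle : ∀ f : MvPolynomial (Fin N) ℝ, Fprop f →
        R.inf' hR (fun X => MvPolynomial.eval X f) ≤ v := by
      intro f hf
      have h1 : ENNReal.ofReal (R.inf' hR (fun X => MvPolynomial.eval X f)) ≤ vE :=
        le_iSup₂ (f := fun f (_ : Fprop f) =>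
          ENNReal.ofReal (R.inf' hR (fun X => MvPolynomial.eval X f))) f hf
      exact (ENNReal.ofReal_le_iff_le_toReal htop).1 h1
    -- the convex set C : image of F in ℝ^R
    set C : Set ((↥R) → ℝ) :=
      (fun f : MvPolynomial (Fin N) ℝ => fun X : ↥R => MvPolynomial.eval (X : Fin N → ℝ) f) ''
        {f | Fprop f} with hC
    set B : Set ((↥R) → ℝ) := {y | ∀ X : ↥R, v < y X} with hB
    have hBopen : IsOpen B := by
      have : B = ⋂ X : ↥R, (fun y : (↥R) → ℝ => y X) ⁻¹' Set.Ioi v := by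
        ext y; simp [hB, Set.mem_iInter]
      rw [this]
      exact isOpen_iInter_of_finite fun X => (isOpen_Ioi).preimage (continuous_apply X)
    have hBconv : Convex ℝ B := by
      have : B = ⋂ X : ↥R, {y : (↥R) → ℝ | v < y X} := by
        ext y; simp [hB, Set.mem_iInter]
      rw [this]
      exact convex_iInter fun X => convex_halfSpace_gt ⟨fun _ _ => rfl, fun _ _ => rfl⟩ v
    have hFconv : Convex ℝ {f | Fprop f} := by
      rintro f hf g hg a b ha hb hab
      have heval : ∀ x : Fin N → ℝ, MvPolynomial.eval x (a • f + b • g)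
          = a * MvPolynomial.eval x f + b * MvPolynomial.eval x g := by
        intro x; simp [MvPolynomial.smul_eval]
      refine ⟨?_, ?_, ?_⟩
      · refine (MvPolynomial.totalDegree_add _ _).trans (max_le ?_ ?_)
        · exact (MvPolynomial.totalDegree_smul_le _ _).trans hf.1
        · exact (MvPolynomial.totalDegree_smul_le _ _).trans hg.1
      · have : (fun x => MvPolynomial.eval x (a • f + b • g)) =
            fun x => a * MvPolynomial.eval x f + b * MvPolynomial.eval x g := funext heval
        rw [this, fexp_comb, hf.2.1, hg.2.1]; ring
      · have hptwise : ∀ x ∈ Q.support,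
            Q x * (MvPolynomial.eval x (a • f + b • g)) ^ 2 ≤
            Q x * (a * (MvPolynomial.eval x f) ^ 2 + b * (MvPolynomial.eval x g) ^ 2) := by
          intro x _
          apply mul_le_mul_of_nonneg_left _ (hQ.1 x)
          rw [heval x]
          nlinarith [sq_nonneg (MvPolynomial.eval x f - MvPolynomial.eval x g),
            mul_nonneg ha hb]
        calc fexp Q (fun x => (MvPolynomial.eval x (a • f + b • g)) ^ 2)
            ≤ fexp Q (fun x => a * (MvPolynomial.eval x f) ^ 2
                + b * (MvPolynomial.eval x g) ^ 2) := Finset.sum_le_sum hptwise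
          _ = a * fexp Q (fun x => (MvPolynomial.eval x f) ^ 2)
                + b * fexp Q (fun x => (MvPolynomial.eval x g) ^ 2) := fexp_comb ..
          _ ≤ a * 1 + b * 1 := by
                gcongr
                · exact hf.2.2
                · exact hg.2.2
          _ = 1 := by linarith
    have hCconv : Convex ℝ C := hFconv.is_linear_image
      ⟨fun p q => by funext X; simp, fun c p => by funext X; simp [MvPolynomial.smul_eval]⟩
    have hdisj : Disjoint B C := by
      rw [Set.disjoint_left]
      rintro y hy ⟨f, hf, rfl⟩
      obtain ⟨X0, hX0, hinf⟩ := Finset.exists_mem_eq_inf' hR (fun X => MvPolynomial.eval X f)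
      have h1 := hy ⟨X0, hX0⟩
      have h2 := hminle f hf
      rw [hinf] at h2
      simp only at h1
      linarith
    obtain ⟨φ0, u0, hBlt, hCge⟩ := geometric_hahn_banach_open hBconv hBopen hCconv hdisj
    set φ : ((↥R) → ℝ) →L[ℝ] ℝ := -φ0 with hphi
    set u : ℝ := -u0 with hu
    have hCle : ∀ c ∈ C, φ c ≤ u := by
      intro c hc; have := hCge c hc; simpa [hphi, hu] using neg_le_neg this
    have hBgt : ∀ y ∈ B, u < φ y := by
      intro y hy; have := hBlt y hy; simpa [hphi, hu] using neg_lt_neg this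
    set p : ↥R → ℝ := fun X => φ (Pi.single X 1) with hp
    have hrep : ∀ y : (↥R) → ℝ, φ y = ∑ X : ↥R, y X * p X := by
      intro y
      have hy : y = ∑ X : ↥R, y X • (Pi.single X (1:ℝ) : ↥R → ℝ) := by
        funext Z
        simp [Finset.sum_apply, Pi.single_apply, mul_ite]
      calc φ y = φ (∑ X : ↥R, y X • (Pi.single X (1:ℝ) : ↥R → ℝ)) := by rw [← hy]
        _ = ∑ X : ↥R, y X * p X := by
            rw [map_sum]
            exact Finset.sum_congr rfl fun X _ => by rw [map_smul]; simp [hp]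
    -- membership of constants in B
    have hconstB : ∀ ε : ℝ, 0 < ε → (fun _ : ↥R => v + ε) ∈ B := by
      intro ε hε X; simpa using by linarith
    -- p is nonnegative
    have hpnn : ∀ X : ↥R, 0 ≤ p X := by
      intro X0
      by_contra hneg
      push_neg at hneg
      have hc1 : u < φ (fun _ : ↥R => v + 1) := hBgt _ (hconstB 1 one_pos)
      set t : ℝ := (φ (fun _ : ↥R => v + 1) - u) / (-p X0) + 1 with ht
      have htpos : 0 < t := by
        have hd : 0 < (φ (fun _ : ↥R => v + 1) - u) / (-p X0) :=
          div_pos (by linarith) (by linarith)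
        rw [ht]; linarith
      have hmem : ((fun _ : ↥R => v + 1) + t • (Pi.single X0 (1:ℝ) : ↥R → ℝ)) ∈ B := by
        intro X
        simp only [Pi.add_apply, Pi.smul_apply, Pi.single_apply, smul_eq_mul]
        split_ifs <;> linarith
      have h2 := hBgt _ hmem
      rw [map_add, map_smul] at h2
      have hne : p X0 ≠ 0 := ne_of_lt hneg
      have h3 : t * p X0 = -(φ (fun _ : ↥R => v + 1) - u) + p X0 := by
        rw [ht, div_neg, add_mul, neg_mul, div_mul_cancel₀ _ hne, one_mul]
      simp only [smul_eq_mul] at h2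
      rw [show φ (Pi.single X0 (1:ℝ)) = p X0 from rfl] at h2
      nlinarith
    set s : ℝ := ∑ X : ↥R, p X with hs
    have h0C : (0 : (↥R) → ℝ) ∈ C := ⟨0, h0F, by funext X; simp⟩
    have hu0 : 0 ≤ u := by
      have := hCle 0 h0C; simp at this; linarith
    have hspos : 0 < s := by
      have h1 : u < φ (fun _ : ↥R => v + 1) := hBgt _ (hconstB 1 one_pos)
      have h2 : φ (fun _ : ↥R => v + 1) = (v + 1) * s := by
        rw [hrep, hs, Finset.mul_sum]
      nlinarith
    -- u ≤ v * s
    have huvs : u ≤ v * s := by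
      by_contra hlt
      push_neg at hlt
      set ε : ℝ := (u - v * s) / s with hε
      have hεpos : 0 < ε := div_pos (by linarith) hspos
      have h1 := hBgt _ (hconstB ε hεpos)
      have h2 : φ (fun _ : ↥R => v + ε) = (v + ε) * s := by
        rw [hrep, Finset.mul_sum]
      have hne : s ≠ 0 := ne_of_gt hspos
      have h3 : (v + ε) * s = u := by
        rw [hε]; field_simp; ring
      rw [h2, h3] at h1
      exact lt_irrefl _ h1
    -- define the distribution P
    set P : (Fin N → ℝ) →₀ ℝ :=
      Finsupp.indicator R (fun x hx => p ⟨x, hx⟩ / s) with hPdef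
    have hPval : ∀ x (hx : x ∈ R), P x = p ⟨x, hx⟩ / s := fun x hx =>
      Finsupp.indicator_of_mem hx _
    have hPsupp : P.support ⊆ R := by
      intro x hx
      exact_mod_cast Finsupp.support_indicator_subset R _ hx
    have hPnn : ∀ x, 0 ≤ P x := by
      intro x
      by_cases hx : x ∈ R
      · rw [hPval x hx]; exact div_nonneg (hpnn _) hspos.le
      · rw [Finsupp.indicator_of_notMem hx]
    have hsumR : ∀ g : (Fin N → ℝ) → ℝ, ∑ x ∈ P.support, P x * g x = ∑ x ∈ R, P x * g x := by
      intro g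
      refine Finset.sum_subset hPsupp fun x _ hx => ?_
      rw [Finsupp.notMem_support_iff.1 hx, zero_mul]
    have hPsum : ∑ x ∈ P.support, P x = 1 := by
      have h1 : ∑ x ∈ P.support, P x = ∑ x ∈ R, P x := by
        refine Finset.sum_subset hPsupp fun x _ hx => Finsupp.notMem_support_iff.1 hx
      rw [h1, ← Finset.sum_attach R (fun x => P x)]
      have h2 : ∑ X ∈ R.attach, P ↑X = ∑ X ∈ R.attach, p X / s := by
        refine Finset.sum_congr rfl fun X _ => ?_
        rw [hPval _ X.2]
      rw [h2, ← Finset.sum_div]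
      have : ∑ X ∈ R.attach, p X = s := by rw [hs]; rfl
      rw [this, div_self hspos.ne']
    have hPdist : IsDist P := ⟨hPnn, hPsum⟩
    -- key: E_P f ≤ v for all f in F
    have hkey : ∀ f : MvPolynomial (Fin N) ℝ, Fprop f →
        fexp P (fun x => MvPolynomial.eval x f) ≤ v := by
      intro f hf
      have hcf : φ (fun X : ↥R => MvPolynomial.eval (X : Fin N → ℝ) f) ≤ u :=
        hCle _ ⟨f, hf, rfl⟩
      rw [hrep] at hcf
      have hE : fexp P (fun x => MvPolynomial.eval x f)
          = (∑ X : ↥R, MvPolynomial.eval (X : Fin N → ℝ) f * p X) / s := by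
        unfold fexp
        rw [hsumR, ← Finset.sum_attach R (fun x => P x * MvPolynomial.eval x f),
          Finset.sum_div]
        refine Finset.sum_congr rfl fun X _ => ?_
        rw [hPval _ X.2]
        ring
      rw [hE]
      rw [div_le_iff₀ hspos]
      calc ∑ X : ↥R, MvPolynomial.eval (X : Fin N → ℝ) f * p X ≤ u := hcf
        _ ≤ v * s := huvs
    -- conclude
    refine le_trans (iInf₂_le P ⟨hPdist, hPsupp⟩) ?_
    refine iSup₂_le fun f hf => ?_
    calc ENNReal.ofReal (fexp P (fun x => MvPolynomial.eval x f))
        ≤ ENNReal.ofReal v := ENNReal.ofReal_le_ofReal (hkey f hf)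
      _ = vE := ENNReal.ofReal_toReal htop
  · -- easy direction
    refine le_iInf fun P => le_iInf fun hP => ?_
    refine iSup₂_le fun f hf => ?_
    refine le_trans ?_ (le_iSup₂ (f := fun f (_ : Fprop f) =>
      ENNReal.ofReal (fexp P (fun x => MvPolynomial.eval x f))) f hf)
    apply ENNReal.ofReal_le_ofReal
    have h1 : ∀ x ∈ P.support,
        P x * (R.inf' hR fun X => MvPolynomial.eval X f) ≤ P x * MvPolynomial.eval x f :=
      fun x hx => mul_le_mul_of_nonneg_left
        (Finset.inf'_le _ (hP.2 hx)) (hP.1.1 x)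
    calc R.inf' hR (fun X => MvPolynomial.eval X f)
        = (∑ x ∈ P.support, P x) * (R.inf' hR fun X => MvPolynomial.eval X f) := by
          rw [hP.1.2, one_mul]
      _ = ∑ x ∈ P.support, P x * (R.inf' hR fun X => MvPolynomial.eval X f) :=
          Finset.sum_mul ..
      _ ≤ ∑ x ∈ P.support, P x * MvPolynomial.eval x f := Finset.sum_le_sum h1
      _ = fexp P (fun x => MvPolynomial.eval x f) := rfl
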